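/- arXiv:2111.12437 — 5 statements merged into one kernel-verified Lean document; each statement's English description precedes it below -/
import Mathlib

section
/- Let ι be a nonempty finite index set, let α : ι → ℝ be nonnegative, and let M > 0 be real. For every allocation f : ι → ℝ with f k > 0 for all k and ∑_k f k = M, one has ∑_k α k / sqrt(f k) ≥ (∑_k (α k)^{2/3})^{3/2} / sqrt(M). Moreover, if α k > 0 for all k, equality is attained at the allocation f k = M · (α k)^{2/3} / ∑_{k'} (α k')^{2/3}. -/
open Finset

/-- Optimal shot allocation for the 1-norm: for nonnegative `α` and total budget
`M > 0`, any positive allocation `f` with `∑ f = M` satisfies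
`∑ k, α k / sqrt (f k) ≥ (∑ k, (α k)^(2/3))^(3/2) / sqrt M`, with equality (for
strictly positive `α`) at `f k = M * (α k)^(2/3) / ∑ (α k')^(2/3)`. -/
theorem stmt2 {ι : Type*} [Fintype ι] [Nonempty ι]
    (α : ι → ℝ) (hα : ∀ k, 0 ≤ α k) (M : ℝ) (hM : 0 < M) :
    (∀ f : ι → ℝ, (∀ k, 0 < f k) → (∑ k, f k) = M →
      (∑ k, (α k) ^ ((2 : ℝ) / 3)) ^ ((3 : ℝ) / 2) / Real.sqrt M
        ≤ ∑ k, α k / Real.sqrt (f k)) ∧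
    ((∀ k, 0 < α k) →
      (∑ k, M * (α k) ^ ((2 : ℝ) / 3) / (∑ k', (α k') ^ ((2 : ℝ) / 3))) = M ∧
      (∑ k, α k / Real.sqrt (M * (α k) ^ ((2 : ℝ) / 3) / (∑ k', (α k') ^ ((2 : ℝ) / 3))))
        = (∑ k, (α k) ^ ((2 : ℝ) / 3)) ^ ((3 : ℝ) / 2) / Real.sqrt M) := by
  constructor
  · intro f hf hsum
    have hconj : Real.HolderConjugate ((3 : ℝ) / 2) 3 := by
      constructor <;> norm_num
    have hg : ∀ k, 0 ≤ α k / Real.sqrt (f k) := fun k =>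
      div_nonneg (hα k) (Real.sqrt_nonneg _)
    have hholder := Real.inner_le_Lp_mul_Lq_of_nonneg (univ : Finset ι)
      (f := fun k => (α k / Real.sqrt (f k)) ^ ((2 : ℝ) / 3))
      (g := fun k => (f k) ^ ((1 : ℝ) / 3)) hconj
      (fun i _ => Real.rpow_nonneg (hg i) _)
      (fun i _ => Real.rpow_nonneg (hf i).le _)
    have key : ∑ k, (α k) ^ ((2 : ℝ) / 3)
        ≤ (∑ k, α k / Real.sqrt (f k)) ^ ((2 : ℝ) / 3) * M ^ ((1 : ℝ) / 3) := by
      have e1 : ∀ k, (α k / Real.sqrt (f k)) ^ ((2 : ℝ) / 3) * (f k) ^ ((1 : ℝ) / 3)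
          = (α k) ^ ((2 : ℝ) / 3) := by
        intro k
        rw [Real.div_rpow (hα k) (Real.sqrt_nonneg _), Real.sqrt_eq_rpow,
          ← Real.rpow_mul (hf k).le]
        norm_num
        exact div_mul_cancel₀ _ (ne_of_gt (Real.rpow_pos_of_pos (hf k) _))
      have e2 : ∀ k, ((α k / Real.sqrt (f k)) ^ ((2 : ℝ) / 3)) ^ ((3 : ℝ) / 2)
          = α k / Real.sqrt (f k) := by
        intro k
        rw [← Real.rpow_mul (hg k)]
        norm_num
      have e3 : ∀ k, ((f k) ^ ((1 : ℝ) / 3)) ^ (3 : ℝ) = f k := by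
        intro k
        rw [← Real.rpow_mul (hf k).le]
        norm_num
      calc ∑ k, (α k) ^ ((2 : ℝ) / 3)
          = ∑ k, (α k / Real.sqrt (f k)) ^ ((2 : ℝ) / 3) * (f k) ^ ((1 : ℝ) / 3) := by
            exact (Finset.sum_congr rfl fun k _ => (e1 k)).symm
        _ ≤ (∑ k, ((α k / Real.sqrt (f k)) ^ ((2 : ℝ) / 3)) ^ ((3 : ℝ) / 2)) ^ (1 / ((3:ℝ)/2))
            * (∑ k, ((f k) ^ ((1 : ℝ) / 3)) ^ (3 : ℝ)) ^ (1 / (3:ℝ)) := hholder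
        _ = (∑ k, α k / Real.sqrt (f k)) ^ ((2 : ℝ) / 3) * M ^ ((1 : ℝ) / 3) := by
            rw [Finset.sum_congr rfl fun k _ => e2 k, Finset.sum_congr rfl fun k _ => e3 k,
              hsum]
            norm_num
    have hL : 0 ≤ ∑ k, (α k) ^ ((2 : ℝ) / 3) :=
      Finset.sum_nonneg fun k _ => Real.rpow_nonneg (hα k) _
    have hR : 0 ≤ ∑ k, α k / Real.sqrt (f k) := Finset.sum_nonneg fun k _ => hg k
    have := Real.rpow_le_rpow hL key (by norm_num : (0:ℝ) ≤ 3/2)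
    rw [Real.mul_rpow (Real.rpow_nonneg hR _) (Real.rpow_nonneg hM.le _),
      ← Real.rpow_mul hR, ← Real.rpow_mul hM.le] at this
    norm_num at this
    rw [div_le_iff₀ (Real.sqrt_pos.mpr hM)]
    calc (∑ k, (α k) ^ ((2 : ℝ) / 3)) ^ ((3 : ℝ) / 2)
        ≤ (∑ k, α k / Real.sqrt (f k)) * M ^ ((1:ℝ)/2) := this
      _ = (∑ k, α k / Real.sqrt (f k)) * Real.sqrt M := by rw [Real.sqrt_eq_rpow]
  · intro hαpos
    set S := ∑ k', (α k') ^ ((2 : ℝ) / 3) with hS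
    have hSpos : 0 < S :=
      Finset.sum_pos (fun k _ => Real.rpow_pos_of_pos (hαpos k) _) univ_nonempty
    have h1 : (∑ k, M * (α k) ^ ((2 : ℝ) / 3) / S) = M := by
      rw [← Finset.sum_div, ← Finset.mul_sum, ← hS, mul_div_assoc, div_self hSpos.ne',
        mul_one]
    refine ⟨h1, ?_⟩
    have hterm : ∀ k, α k / Real.sqrt (M * (α k) ^ ((2 : ℝ) / 3) / S)
        = (α k) ^ ((2 : ℝ) / 3) * (Real.sqrt S / Real.sqrt M) := by
      intro k
      have hαk := hαpos k
      rw [Real.sqrt_div' _ hSpos.le, Real.sqrt_mul hM.le]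
      rw [Real.sqrt_eq_rpow ((α k) ^ ((2:ℝ)/3)), ← Real.rpow_mul hαk.le]
      norm_num
      nth_rewrite 1 [show α k = α k ^ ((2:ℝ)/3) * α k ^ ((1:ℝ)/3) by
        rw [← Real.rpow_add hαk]; norm_num]
      have h13 : α k ^ ((1:ℝ)/3) ≠ 0 := ne_of_gt (Real.rpow_pos_of_pos hαk _)
      have hsM : Real.sqrt M ≠ 0 := ne_of_gt (Real.sqrt_pos.mpr hM)
      field_simp
    rw [Finset.sum_congr rfl fun k _ => hterm k, ← Finset.sum_mul, ← hS]
    have hS32 : S ^ ((3 : ℝ) / 2) = S * Real.sqrt S := by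
      have : ((3 : ℝ) / 2) = 1 + 1 / 2 := by norm_num
      rw [this, Real.rpow_add hSpos, Real.rpow_one, Real.sqrt_eq_rpow]
    rw [hS32, mul_div_assoc]
end

section
/- Let ι be a nonempty finite index set, let b : ι → ℝ be positive, and let ε > 0. For every T : ι → ℝ with T l > 0 for all l satisfying the error constraint ∑_l (b l)² / (T l)² ≤ ε², one has ∑_l T l ≥ ε⁻¹ (∑_l (b l)^{2/3})^{3/2}. Moreover, the choice T l = ε⁻¹ (b l)^{2/3} (∑_{l'} (b l')^{2/3})^{1/2} satisfies the constraint with equality and attains ∑_l T l = ε⁻¹ (∑_l (b l)^{2/3})^{3/2}. -/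
open Finset

/-- Optimal phase-estimation resource allocation: for positive `b` and error
budget `ε > 0`, any positive `T` with `∑ l, (b l)²/(T l)² ≤ ε²` satisfies
`∑ T ≥ ε⁻¹ (∑ (b l)^(2/3))^(3/2)`, and the explicit choice
`T l = ε⁻¹ (b l)^(2/3) (∑ (b l')^(2/3))^(1/2)` meets the constraint with
equality and attains this total. -/
theorem stmt4 {ι : Type*} [Fintype ι] [Nonempty ι]
    (b : ι → ℝ) (hb : ∀ l, 0 < b l) (ε : ℝ) (hε : 0 < ε) :
    (∀ T : ι → ℝ, (∀ l, 0 < T l) → (∑ l, (b l) ^ 2 / (T l) ^ 2) ≤ ε ^ 2 →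
      ε⁻¹ * (∑ l, (b l) ^ ((2 : ℝ) / 3)) ^ ((3 : ℝ) / 2) ≤ ∑ l, T l) ∧
    ((∑ l, (b l) ^ 2 /
        (ε⁻¹ * (b l) ^ ((2 : ℝ) / 3) * (∑ l', (b l') ^ ((2 : ℝ) / 3)) ^ ((1 : ℝ) / 2)) ^ 2)
      = ε ^ 2 ∧
     (∑ l, ε⁻¹ * (b l) ^ ((2 : ℝ) / 3) * (∑ l', (b l') ^ ((2 : ℝ) / 3)) ^ ((1 : ℝ) / 2))
      = ε⁻¹ * (∑ l, (b l) ^ ((2 : ℝ) / 3)) ^ ((3 : ℝ) / 2)) := by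
  set S : ℝ := ∑ l, (b l) ^ ((2 : ℝ) / 3) with hS
  have hSpos : 0 < S :=
    Finset.sum_pos (fun l _ => Real.rpow_pos_of_pos (hb l) _) Finset.univ_nonempty
  constructor
  · intro T hT hcon
    set X : ℝ := ∑ l, (b l) ^ 2 / (T l) ^ 2 with hX
    have hXpos : 0 < X :=
      Finset.sum_pos (fun l _ => div_pos (pow_pos (hb l) 2) (pow_pos (hT l) 2))
        Finset.univ_nonempty
    have hYpos : 0 < ∑ l, T l := Finset.sum_pos (fun l _ => hT l) Finset.univ_nonempty
    have hpq : Real.HolderConjugate 3 (3 / 2) := ⟨by norm_num, by norm_num, by norm_num⟩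
    have holder := Real.inner_le_Lp_mul_Lq Finset.univ
      (fun l => ((b l) ^ 2 / (T l) ^ 2) ^ ((1 : ℝ) / 3))
      (fun l => (T l) ^ ((2 : ℝ) / 3)) hpq
    have key : S ≤ X ^ ((1 : ℝ) / 3) * (∑ l, T l) ^ ((2 : ℝ) / 3) := by
      have h1 : ∀ l, ((b l) ^ 2 / (T l) ^ 2) ^ ((1 : ℝ) / 3) * (T l) ^ ((2 : ℝ) / 3)
          = (b l) ^ ((2 : ℝ) / 3) := by
        intro l
        have hbl := hb l; have hTl := hT l
        rw [Real.div_rpow (by positivity) (by positivity),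
          ← Real.rpow_natCast (b l) 2, ← Real.rpow_natCast (T l) 2,
          ← Real.rpow_mul hbl.le, ← Real.rpow_mul hTl.le]
        push_cast
        norm_num
        exact div_mul_cancel₀ _ (Real.rpow_pos_of_pos hTl _).ne'
      have h2 : ∀ l, |((b l) ^ 2 / (T l) ^ 2) ^ ((1 : ℝ) / 3)| ^ (3 : ℝ)
          = (b l) ^ 2 / (T l) ^ 2 := by
        intro l
        rw [abs_of_nonneg (Real.rpow_nonneg (div_nonneg (sq_nonneg (b l)) (sq_nonneg (T l))) _),
          ← Real.rpow_mul (div_nonneg (sq_nonneg (b l)) (sq_nonneg (T l)))]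
        norm_num
      have h3 : ∀ l, |(T l) ^ ((2 : ℝ) / 3)| ^ ((3 : ℝ) / 2) = T l := by
        intro l
        rw [abs_of_nonneg (Real.rpow_nonneg (hT l).le _), ← Real.rpow_mul (hT l).le]
        norm_num
      calc S = ∑ l, ((b l) ^ 2 / (T l) ^ 2) ^ ((1 : ℝ) / 3) * (T l) ^ ((2 : ℝ) / 3) := by
              rw [hS]; exact (Finset.sum_congr rfl fun l _ => h1 l).symm
        _ ≤ (∑ l, |((b l) ^ 2 / (T l) ^ 2) ^ ((1 : ℝ) / 3)| ^ (3 : ℝ)) ^ ((1:ℝ)/3) *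
            (∑ l, |(T l) ^ ((2 : ℝ) / 3)| ^ ((3:ℝ)/2)) ^ ((1:ℝ)/(3/2)) := by
              simpa using holder
        _ = X ^ ((1 : ℝ) / 3) * (∑ l, T l) ^ ((2 : ℝ) / 3) := by
              rw [Finset.sum_congr rfl fun l _ => h2 l, Finset.sum_congr rfl fun l _ => h3 l]
              norm_num
              exact Or.inl rfl
    have hXle : X ^ ((1 : ℝ) / 3) ≤ (ε ^ 2) ^ ((1 : ℝ) / 3) :=
      Real.rpow_le_rpow hXpos.le hcon (by norm_num)
    have key2 : S ≤ (ε ^ 2) ^ ((1 : ℝ) / 3) * (∑ l, T l) ^ ((2 : ℝ) / 3) :=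
      key.trans (mul_le_mul_of_nonneg_right hXle (by positivity))
    have key3 : S ^ ((3 : ℝ) / 2) ≤ ε * ∑ l, T l := by
      have := Real.rpow_le_rpow hSpos.le key2 (by norm_num : (0:ℝ) ≤ 3/2)
      refine this.trans_eq ?_
      rw [Real.mul_rpow (by positivity) (by positivity),
        ← Real.rpow_mul (by positivity), ← Real.rpow_mul hYpos.le,
        ← Real.rpow_natCast ε 2, ← Real.rpow_mul hε.le]
      norm_num
    rw [inv_mul_le_iff₀ hε]
    linarith [key3]
  · have hterm : ∀ l : ι,
        (b l) ^ 2 / (ε⁻¹ * (b l) ^ ((2 : ℝ) / 3) * S ^ ((1 : ℝ) / 2)) ^ 2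
          = ε ^ 2 / S * (b l) ^ ((2 : ℝ) / 3) := by
      intro l
      have hbl := hb l
      have e1 : ((b l) ^ ((2:ℝ)/3)) ^ (2:ℕ) = (b l) ^ ((4:ℝ)/3) := by
        rw [← Real.rpow_natCast ((b l) ^ ((2:ℝ)/3)) 2, ← Real.rpow_mul hbl.le]
        norm_num
      have e2 : (S ^ ((1:ℝ)/2)) ^ (2:ℕ) = S := by
        rw [← Real.rpow_natCast (S ^ ((1:ℝ)/2)) 2, ← Real.rpow_mul hSpos.le]
        norm_num
      have e3 : (b l) ^ (2:ℕ) = (b l) ^ ((2:ℝ)/3) * (b l) ^ ((4:ℝ)/3) := by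
        rw [← Real.rpow_natCast (b l) 2, ← Real.rpow_add hbl]
        norm_num
      rw [mul_pow, mul_pow, e1, e2, e3]
      have hb23 : (0:ℝ) < (b l) ^ ((2:ℝ)/3) := Real.rpow_pos_of_pos hbl _
      have hb43 : (0:ℝ) < (b l) ^ ((4:ℝ)/3) := Real.rpow_pos_of_pos hbl _
      field_simp
    constructor
    · rw [Finset.sum_congr rfl fun l _ => hterm l, ← Finset.mul_sum, ← hS,
        div_mul_cancel₀ _ hSpos.ne']
    · have : ∀ l : ι, ε⁻¹ * (b l) ^ ((2 : ℝ) / 3) * S ^ ((1 : ℝ) / 2)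
          = ε⁻¹ * S ^ ((1 : ℝ) / 2) * (b l) ^ ((2 : ℝ) / 3) := fun l => by ring
      rw [Finset.sum_congr rfl fun l _ => this l, ← Finset.mul_sum, ← hS, mul_assoc]
      congr 1
      rw [mul_comm, ← Real.rpow_one_add' hSpos.le (by norm_num : (1:ℝ) + 1/2 ≠ 0)]
      norm_num
end

section
/- Let n be a finite type, let H : ℝ → Matrix n n ℂ, ψ : ℝ → (n → ℂ), and E : ℝ → ℝ, and fix t₀ ∈ ℝ. Assume: (i) every entry t ↦ (H t) i j has derivative (H') i j at t₀ for some matrix H' : Matrix n n ℂ; (ii) every component t ↦ ψ t i has derivative (ψ') i at t₀ for some ψ' : n → ℂ; (iii) E has derivative E'(t₀) at t₀; (iv) for all t, H t is Hermitian, ∑_i |ψ t i|² = 1, and (H t) *ᵥ (ψ t) = (E t : ℂ) • (ψ t). Then E'(t₀) = Re(∑_{i,j} conj(ψ t₀ i) · (H' i j) · (ψ t₀ j)), i.e., the derivative of the eigenvalue equals the expectation value of the derivative of the Hamiltonian in the corresponding normalized eigenvector (the Hellmann–Feynman theorem). -/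
open Finset Matrix

/-- Hellmann–Feynman theorem (finite dimensions): if `ψ t` is a normalized
eigenvector of the Hermitian family `H t` with eigenvalue `E t`, and all data
are differentiable at `t₀`, then `E' t₀` equals the expectation value of the
derivative of the Hamiltonian, `Re ⟨ψ t₀, H' ψ t₀⟩`. -/
theorem stmt7 {n : Type*} [Fintype n]
    (H : ℝ → Matrix n n ℂ) (ψ : ℝ → n → ℂ) (E : ℝ → ℝ) (t₀ : ℝ)
    (H' : Matrix n n ℂ) (ψ' : n → ℂ) (E' : ℝ)
    (hH : ∀ i j, HasDerivAt (fun t => H t i j) (H' i j) t₀)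
    (hψ : ∀ i, HasDerivAt (fun t => ψ t i) (ψ' i) t₀)
    (hE : HasDerivAt E E' t₀)
    (herm : ∀ t, (H t).IsHermitian)
    (hnorm : ∀ t, (∑ i, ‖ψ t i‖ ^ 2) = 1)
    (heig : ∀ t, (H t) *ᵥ (ψ t) = (E t : ℂ) • (ψ t)) :
    E' = (∑ i, ∑ j, (starRingEnd ℂ) (ψ t₀ i) * H' i j * ψ t₀ j).re := by
  set c := starRingEnd ℂ with hc
  -- complex normalization
  have hnormC : ∀ t, (∑ i, c (ψ t i) * ψ t i) = 1 := by
    intro t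
    have : (∑ i, c (ψ t i) * ψ t i) = ((∑ i, ‖ψ t i‖ ^ 2 : ℝ) : ℂ) := by
      push_cast
      refine Finset.sum_congr rfl fun i _ => ?_
      rw [hc, mul_comm, Complex.mul_conj']
    rw [this, hnorm t]; norm_num
  -- derivative of the normalization constant is zero
  have hD : (∑ i, (c (ψ' i) * ψ t₀ i + c (ψ t₀ i) * ψ' i)) = 0 := by
    have hN : HasDerivAt (fun t => ∑ i, c (ψ t i) * ψ t i)
        (∑ i, (c (ψ' i) * ψ t₀ i + c (ψ t₀ i) * ψ' i)) t₀ := by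
      apply HasDerivAt.fun_sum; intro i _
      exact (hψ i).star.mul (hψ i)
    have hN1 : HasDerivAt (fun _ : ℝ => (1 : ℂ))
        (∑ i, (c (ψ' i) * ψ t₀ i + c (ψ t₀ i) * ψ' i)) t₀ := by
      refine hN.congr_of_eventuallyEq ?_
      filter_upwards with t using (hnormC t).symm
    exact hN1.unique (hasDerivAt_const _ _)
  -- eigenvalue equation componentwise
  have heig' : ∀ t i, (∑ j, H t i j * ψ t j) = (E t : ℂ) * ψ t i := by
    intro t i
    have := congrFun (heig t) i
    simpa [Matrix.mulVec, dotProduct] using this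
  -- Hermitian componentwise
  have hherm : ∀ t i j, c (H t i j) = H t j i := by
    intro t i j
    have := congrFun (congrFun (herm t) j) i
    simpa [Matrix.conjTranspose_apply] using this.symm ▸ rfl
  -- the quadratic form equals E t
  have hgE : ∀ t, (∑ i, ∑ j, c (ψ t i) * H t i j * ψ t j) = (E t : ℂ) := by
    intro t
    calc (∑ i, ∑ j, c (ψ t i) * H t i j * ψ t j)
        = ∑ i, c (ψ t i) * (∑ j, H t i j * ψ t j) := by
          refine Finset.sum_congr rfl fun i _ => ?_
          rw [Finset.mul_sum]; exact Finset.sum_congr rfl fun j _ => by ring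
      _ = ∑ i, c (ψ t i) * ((E t : ℂ) * ψ t i) := by
          refine Finset.sum_congr rfl fun i _ => ?_; rw [heig' t i]
      _ = (E t : ℂ) * ∑ i, c (ψ t i) * ψ t i := by
          rw [Finset.mul_sum]; exact Finset.sum_congr rfl fun i _ => by ring
      _ = (E t : ℂ) := by rw [hnormC t, mul_one]
  -- derivative of the quadratic form
  set A := ∑ i, ∑ j, c (ψ' i) * H t₀ i j * ψ t₀ j with hA
  set B := ∑ i, ∑ j, c (ψ t₀ i) * H' i j * ψ t₀ j with hB
  set C := ∑ i, ∑ j, c (ψ t₀ i) * H t₀ i j * ψ' j with hC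
  have hg : HasDerivAt (fun t => ∑ i, ∑ j, c (ψ t i) * H t i j * ψ t j)
      (A + B + C) t₀ := by
    have : HasDerivAt (fun t => ∑ i, ∑ j, c (ψ t i) * H t i j * ψ t j)
        (∑ i, ∑ j, (c (ψ' i) * H t₀ i j * ψ t₀ j + c (ψ t₀ i) * H' i j * ψ t₀ j
          + c (ψ t₀ i) * H t₀ i j * ψ' j)) t₀ := by
      apply HasDerivAt.fun_sum; intro i _
      apply HasDerivAt.fun_sum; intro j _
      have := ((hψ i).star.mul (hH i j)).mul (hψ j)
      convert this using 1
      · rfl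
      · rfl
      rw [hc]; simp only [starRingEnd_apply, Pi.mul_apply]; ring
    convert this using 1
    rw [hA, hB, hC]
    simp only [← Finset.sum_add_distrib]
  -- derivative of t ↦ (E t : ℂ)
  have hgE' : HasDerivAt (fun t => ∑ i, ∑ j, c (ψ t i) * H t i j * ψ t j)
      ((E' : ℂ)) t₀ := by
    have := hE.ofReal_comp
    refine this.congr_of_eventuallyEq ?_
    filter_upwards with t using hgE t
  have hkey : (E' : ℂ) = A + B + C := hgE'.unique hg
  -- A + C = E t₀ * 0 = 0
  have hAval : A = (E t₀ : ℂ) * ∑ i, c (ψ' i) * ψ t₀ i := by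
    rw [hA, Finset.mul_sum]
    refine Finset.sum_congr rfl fun i _ => ?_
    calc (∑ j, c (ψ' i) * H t₀ i j * ψ t₀ j)
        = c (ψ' i) * (∑ j, H t₀ i j * ψ t₀ j) := by
          rw [Finset.mul_sum]; exact Finset.sum_congr rfl fun j _ => by ring
      _ = (E t₀ : ℂ) * (c (ψ' i) * ψ t₀ i) := by rw [heig' t₀ i]; ring
  have hCval : C = (E t₀ : ℂ) * ∑ i, c (ψ t₀ i) * ψ' i := by
    rw [hC, Finset.sum_comm, Finset.mul_sum]
    refine Finset.sum_congr rfl fun j _ => ?_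
    calc (∑ i, c (ψ t₀ i) * H t₀ i j * ψ' j)
        = c (∑ i, H t₀ j i * ψ t₀ i) * ψ' j := by
          rw [map_sum, Finset.sum_mul]
          refine Finset.sum_congr rfl fun i _ => ?_
          rw [← hherm t₀ j i, _root_.map_mul]
          ring
      _ = (E t₀ : ℂ) * (c (ψ t₀ j) * ψ' j) := by
          rw [heig' t₀ j, _root_.map_mul, hc, Complex.conj_ofReal]
          ring
  have hAC : A + C = 0 := by
    rw [hAval, hCval, ← mul_add, ← Finset.sum_add_distrib, hD, mul_zero]
  have : (E' : ℂ) = B := by rw [hkey]; linear_combination hAC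
  rw [hB] at this
  exact_mod_cast congrArg Complex.re this
end

section
/- Let ι and n be finite types, let h : ι → ℝ be nonnegative with λ := ∑_i h i > 0, and let P : ι → Matrix n n ℂ be such that each P i is unitary. Define the SELECT matrix S : Matrix (ι × n) (ι × n) ℂ by S (i,a) (j,b) = (if i = j then (P i) a b else 0), the prepared ancilla state v : ι → ℂ by v i = sqrt(h i / λ), and for w : ι → ℂ, φ : n → ℂ write (w ⊗ φ)(i,a) = w i · φ a. Then for all ψ₁, ψ₂ : n → ℂ: ⟨v ⊗ ψ₁, S *ᵥ (v ⊗ ψ₂)⟩ = (1/λ) · ⟨ψ₁, O *ᵥ ψ₂⟩, where O = ∑_i (h i : ℂ) • (P i) and ⟨x,y⟩ = ∑_k conj(x k) · y k. -/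
open Finset Matrix

/-- Correctness of the LCU block encoding: with `SELECT` matrix
`S (i,a) (j,b) = δ_{ij} (P i) a b`, prepared ancilla amplitudes
`v i = sqrt (h i / λ)` where `λ = ∑ h i > 0`, and tensor states
`(v ⊗ φ)(i,a) = v i · φ a`, one has
`⟨v ⊗ ψ₁, S (v ⊗ ψ₂)⟩ = (1/λ) ⟨ψ₁, O ψ₂⟩` for `O = ∑ i, h i • P i`. -/
theorem stmt8 {ι n : Type*} [Fintype ι] [Fintype n] [DecidableEq ι] [DecidableEq n]
    (h : ι → ℝ) (hh : ∀ i, 0 ≤ h i) (hpos : 0 < ∑ i, h i)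
    (P : ι → Matrix n n ℂ) (hP : ∀ i, P i ∈ Matrix.unitaryGroup n ℂ)
    (S : Matrix (ι × n) (ι × n) ℂ)
    (hS : ∀ i a j b, S (i, a) (j, b) = if i = j then P i a b else 0)
    (v : ι → ℂ) (hv : ∀ i, v i = (Real.sqrt (h i / ∑ i', h i') : ℝ))
    (ψ₁ ψ₂ : n → ℂ) :
    (∑ k : ι × n, (starRingEnd ℂ) (v k.1 * ψ₁ k.2) *
        (S *ᵥ (fun p : ι × n => v p.1 * ψ₂ p.2)) k)
      = ((1 / (∑ i, h i) : ℝ) : ℂ) *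
        ∑ a, (starRingEnd ℂ) (ψ₁ a) * ((∑ i, (h i : ℂ) • P i) *ᵥ ψ₂) a := by
  have hconj : ∀ i, (starRingEnd ℂ) (v i) = v i := fun i => by
    rw [hv]; exact Complex.conj_ofReal _
  have hvv : ∀ i, v i * v i = ((h i / ∑ i', h i' : ℝ) : ℂ) := fun i => by
    rw [hv, ← Complex.ofReal_mul, Real.mul_self_sqrt (div_nonneg (hh i) hpos.le)]
  simp only [mulVec, dotProduct, Fintype.sum_prod_type, _root_.map_mul, hS, hconj,
    Matrix.sum_apply, Matrix.smul_apply, smul_eq_mul, ite_mul, zero_mul,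
    mul_ite, mul_zero, Finset.mul_sum]
  conv_lhs => enter [2, i, 2, a]; rw [Finset.sum_comm]
  simp only [Finset.sum_ite_eq, Finset.mem_univ, if_true]
  rw [Finset.sum_comm]
  refine Finset.sum_congr rfl fun a _ => ?_
  rw [Finset.sum_comm]
  refine Finset.sum_congr rfl fun b _ => ?_
  rw [Finset.sum_mul, Finset.mul_sum, Finset.mul_sum]
  refine Finset.sum_congr rfl fun i _ => ?_
  rw [show v i * (starRingEnd ℂ) (ψ₁ a) * (P i a b * (v i * ψ₂ b))
      = (v i * v i) * ((starRingEnd ℂ) (ψ₁ a) * (P i a b * ψ₂ b)) by ring, hvv i]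
  push_cast
  ring
end

section
/- Let H be a complex inner product space (inner product conjugate-linear in the first argument), ψ ∈ H a unit vector, U : H → H a unitary (linear isometric equivalence), and suppose a := ⟨ψ, U ψ⟩ is real with a² < 1. Set χ := (1−a²)^{−1/2} • (Uψ − a•ψ), let R_ψ : H → H be the reflection R_ψ v = v − 2⟨ψ,v⟩•ψ, and let S = R_ψ ∘ U ∘ R_ψ ∘ U⁻¹. Then S (ψ + Complex.I • χ) = ((2a² − 1) + 2a·sqrt(1−a²)·Complex.I) • (ψ + Complex.I • χ); in particular ψ + i χ is an eigenvector of the Szegedy walk operator S with eigenvalue e^{iθ} of unit modulus satisfying cos θ = 2a² − 1 = 2|⟨ψ|U|ψ⟩|² − 1. -/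
open scoped InnerProductSpace ComplexConjugate

/-- Eigenvalue relation for the Szegedy walk operator `S = R U R U⁻¹` with
`R = I − 2|ψ⟩⟨ψ|`: if `a = ⟨ψ, Uψ⟩` is real with `a² < 1`, then `ψ + i χ`
(with `χ` the normalized component of `Uψ` orthogonal to `ψ`) is an eigenvector
of `S` with eigenvalue `(2a² − 1) + 2a√(1−a²) i`, a unit complex number `e^{iθ}`
with `cos θ = 2|⟨ψ|U|ψ⟩|² − 1`. -/
theorem stmt11 {H : Type*} [NormedAddCommGroup H] [InnerProductSpace ℂ H]
    (ψ : H) (hψ : ‖ψ‖ = 1) (U : H ≃ₗᵢ[ℂ] H) (a : ℝ)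
    (ha : ⟪ψ, U ψ⟫_ℂ = (a : ℂ)) (ha2 : a ^ 2 < 1)
    (χ : H) (hχ : χ = ((Real.sqrt (1 - a ^ 2) : ℝ) : ℂ)⁻¹ • (U ψ - (a : ℂ) • ψ))
    (R : H → H) (hR : ∀ v, R v = v - (2 : ℂ) • (⟪ψ, v⟫_ℂ • ψ))
    (S : H → H) (hS : ∀ v, S v = R (U (R (U.symm v)))) :
    S (ψ + Complex.I • χ)
      = ((2 * (a : ℂ) ^ 2 - 1) + 2 * (a : ℂ) * ((Real.sqrt (1 - a ^ 2) : ℝ) : ℂ) * Complex.I)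
        • (ψ + Complex.I • χ) := by
  set s : ℝ := Real.sqrt (1 - a ^ 2) with hs
  have hpos : (0:ℝ) < 1 - a ^ 2 := by linarith
  have hs2 : (s:ℝ) ^ 2 = 1 - a ^ 2 := Real.sq_sqrt hpos.le
  have hsne : ((s:ℂ)) ≠ 0 := by
    simp only [ne_eq, Complex.ofReal_eq_zero]
    positivity
  have hψψ : ⟪ψ, ψ⟫_ℂ = 1 := by
    rw [inner_self_eq_norm_sq_to_K, hψ]; norm_num
  have hUU : ⟪U ψ, U ψ⟫_ℂ = 1 := by rw [U.inner_map_map, hψψ]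
  have hUψ : ⟪U ψ, ψ⟫_ℂ = (a:ℂ) := by
    rw [← inner_conj_symm, ha, Complex.conj_ofReal]
  have hU : U ψ = (a:ℂ) • ψ + (s:ℂ) • χ := by
    rw [hχ, smul_inv_smul₀ hsne]; abel
  have hψχ : ⟪ψ, χ⟫_ℂ = 0 := by
    rw [hχ, inner_smul_right, inner_sub_right, ha, inner_smul_right, hψψ]
    ring
  have hχψ : ⟪χ, ψ⟫_ℂ = 0 := by rw [← inner_conj_symm, hψχ, map_zero]
  have hs2' : ((s:ℂ))^2 = 1 - (a:ℂ)^2 := by exact_mod_cast congrArg Complex.ofReal hs2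
  have hinner0 : ⟪U ψ - (a:ℂ) • ψ, U ψ - (a:ℂ) • ψ⟫_ℂ = ((s:ℂ))^2 := by
    simp only [inner_sub_left, inner_sub_right, inner_smul_left, inner_smul_right,
      hUU, hUψ, ha, hψψ, Complex.conj_ofReal]
    rw [hs2']; ring
  have hχχ : ⟪χ, χ⟫_ℂ = 1 := by
    rw [hχ, inner_smul_left, inner_smul_right, hinner0, map_inv₀, Complex.conj_ofReal]
    field_simp
  set v : H := ψ + Complex.I • χ with hv
  have hsymm : ⟪ψ, U.symm v⟫_ℂ = ⟪U ψ, v⟫_ℂ := by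
    conv_rhs => rw [← U.apply_symm_apply v]
    rw [U.inner_map_map]
  have h1 : U (R (U.symm v)) = v - (2:ℂ) • (⟪U ψ, v⟫_ℂ • U ψ) := by
    rw [hR, map_sub, U.apply_symm_apply, map_smul, map_smul, hsymm]
  rw [hS, h1, hR]
  have hinner1 : ⟪U ψ, v⟫_ℂ = (a:ℂ) + (s:ℂ) * Complex.I := by
    simp only [hv, hU, inner_add_left, inner_add_right, inner_smul_left, inner_smul_right,
      hψψ, hψχ, hχψ, hχχ, Complex.conj_ofReal]
    ring
  rw [hinner1]
  have hinner2 : ⟪ψ, v - (2:ℂ) • (((a:ℂ) + (s:ℂ) * Complex.I) • U ψ)⟫_ℂ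
      = 1 - 2 * ((a:ℂ) + (s:ℂ) * Complex.I) * (a:ℂ) := by
    rw [inner_sub_right, inner_smul_right, inner_smul_right, hv,
      inner_add_right, inner_smul_right, hψχ, hψψ, ha]
    ring
  rw [hinner2, hv, hU]
  match_scalars
  · ring
  · linear_combination (-2*Complex.I) * hs2' + (-2*(a:ℂ)*(s:ℂ)) * Complex.I_sq
end
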